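/- For d ≥ 2, define the map σ ↦ σ' from {σ ∈ S_d : σ(d) = d} to {σ ∈ S_d : σ(d) = d−1} by σ'(d) = d−1, σ'(σ⁻¹(d−1)) = d, and σ'(i) = σ(i) otherwise. This map is a bijection, and Fix(σ) > Fix(σ') for every σ with σ(d) = d; consequently Σ_{σ(d)=d} Fix(σ) > Σ_{σ(d)=d−1} Fix(σ), where Fix denotes the number of fixed points. -/

import Mathlib

open Finset

/-- For `d ≥ 2`, the map `σ ↦ (swap (d-1) d) ∘ σ` is a bijection from
`{σ ∈ S_d : σ(d) = d}` to `{σ ∈ S_d : σ(d) = d−1}` which strictly decreases the number of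
fixed points; consequently `Σ_{σ(d)=d} Fix(σ) > Σ_{σ(d)=d−1} Fix(σ)`. -/
theorem fixed_points_sum_inequality (d : ℕ) (hd : 2 ≤ d) :
    let last : Fin d := ⟨d - 1, by omega⟩
    let penult : Fin d := ⟨d - 2, by omega⟩
    let t : Equiv.Perm (Fin d) := Equiv.swap penult last
    let fix : Equiv.Perm (Fin d) → ℕ := fun σ => (univ.filter fun i => σ i = i).card
    Set.BijOn (fun σ => t * σ)
        {σ : Equiv.Perm (Fin d) | σ last = last}
        {σ : Equiv.Perm (Fin d) | σ last = penult} ∧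
    (∀ σ : Equiv.Perm (Fin d), σ last = last → fix (t * σ) < fix σ) ∧
    ∑ σ ∈ univ.filter (fun σ : Equiv.Perm (Fin d) => σ last = last), fix σ >
      ∑ σ ∈ univ.filter (fun σ : Equiv.Perm (Fin d) => σ last = penult), fix σ := by
  intro last penult t fix
  have hne : penult ≠ last := by
    simp only [penult, last, Fin.ne_iff_vne]; omega
  have ht_p : t penult = last := Equiv.swap_apply_left _ _
  have ht_l : t last = penult := Equiv.swap_apply_right _ _
  have htt : t * t = 1 := Equiv.swap_mul_self _ _
  -- BijOn
  have hbij : Set.BijOn (fun σ => t * σ)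
      {σ : Equiv.Perm (Fin d) | σ last = last}
      {σ : Equiv.Perm (Fin d) | σ last = penult} := by
    refine ⟨?_, ?_, ?_⟩
    · intro σ hσ
      simp only [Set.mem_setOf_eq] at hσ ⊢
      simp [Equiv.Perm.mul_apply, hσ, ht_l]
    · intro a _ b _ h
      simpa using congrArg (fun x => t * x) h
    · intro τ hτ
      simp only [Set.mem_setOf_eq] at hτ
      refine ⟨t * τ, ?_, ?_⟩
      · simp only [Set.mem_setOf_eq, Equiv.Perm.mul_apply, hτ, ht_p]
      · simp [← mul_assoc, htt]
  refine ⟨hbij, ?_⟩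
  -- strict decrease of fix
  have hfix : ∀ σ : Equiv.Perm (Fin d), σ last = last → fix (t * σ) < fix σ := by
    intro σ hσ
    have hsub : (univ.filter fun i => (t * σ) i = i) ⊆
        (univ.filter fun i => σ i = i).erase last := by
      intro i hi
      simp only [mem_filter, mem_univ, true_and] at hi
      simp only [Equiv.Perm.mul_apply] at hi
      rcases eq_or_ne (σ i) penult with h | h
      · rw [h, ht_p] at hi
        subst hi
        exact absurd (hσ.symm.trans h) hne.symm
      rcases eq_or_ne (σ i) last with h' | h'
      · rw [h', ht_l] at hi
        subst hi
        exact absurd (σ.injective (h'.trans hσ.symm)) hne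
      · rw [Equiv.swap_apply_of_ne_of_ne h h'] at hi
        refine mem_erase.mpr ⟨?_, by simp [hi]⟩
        rintro rfl
        exact h' hσ
    calc fix (t * σ) ≤ ((univ.filter fun i => σ i = i).erase last).card :=
          Finset.card_le_card hsub
      _ < (univ.filter fun i => σ i = i).card :=
          Finset.card_erase_lt_of_mem (by simp [hσ])
  refine ⟨hfix, ?_⟩
  -- the sum inequality
  have hsum : ∑ σ ∈ univ.filter (fun σ : Equiv.Perm (Fin d) => σ last = penult), fix σ =
      ∑ σ ∈ univ.filter (fun σ : Equiv.Perm (Fin d) => σ last = last), fix (t * σ) := by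
    refine Finset.sum_nbij' (fun σ => t * σ) (fun σ => t * σ) ?_ ?_ ?_ ?_ ?_
    · intro σ hσ
      simp only [mem_filter, mem_univ, true_and] at hσ ⊢
      simp [Equiv.Perm.mul_apply, hσ, ht_p]
    · intro σ hσ
      simp only [mem_filter, mem_univ, true_and] at hσ ⊢
      simp [Equiv.Perm.mul_apply, hσ, ht_l]
    · intro σ _; simp [← mul_assoc, htt]
    · intro σ _; simp [← mul_assoc, htt]
    · intro σ _; simp [← mul_assoc, htt]
  rw [hsum]
  apply Finset.sum_lt_sum_of_nonempty
  · exact ⟨1, by simp⟩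
  · intro σ hσ
    exact hfix σ (by simpa using hσ)
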